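/- Suppose |ℳ| > log|𝒳| + 1 and ⌊|ℳ|/(⌊log|𝒳|⌋+1)⌋ ≤ |𝒳|. Then every guessing function G for X given Y induces a deterministic task-encoder f : 𝒳×𝒴 → ℳ whose lists satisfy E[|L^Y_M|^ρ] ≤ 1 + 2^ρ · E[G(X|Y)^ρ] · ( |ℳ|/(log|𝒳| + 1) − 1 )^{−ρ}. -/

import Mathlib

open Real Finset Filter
open scoped Classical

noncomputable section

/-- `G` is a guessing function for `𝒳` given side-information in `W`: for each
side-information value `w`, `x ↦ G x w` is a bijection from `𝒳` onto `{1, …, |𝒳|}`. -/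
def IsGuessing {𝒳 W : Type*} [Fintype 𝒳] (G : 𝒳 → W → ℕ) : Prop :=
  ∀ w : W, (Function.Injective fun x => G x w) ∧
    ∀ x, G x w ∈ Finset.Icc 1 (Fintype.card 𝒳)

/-- `P` is a probability mass function on `𝒳 × 𝒴` (written in curried form). -/
def IsPMF {𝒳 𝒴 : Type*} [Fintype 𝒳] [Fintype 𝒴] (P : 𝒳 → 𝒴 → ℝ) : Prop :=
  (∀ x y, 0 ≤ P x y) ∧ ∑ x, ∑ y, P x y = 1

/-- `Q` is a conditional PMF on `M` given `(x, y)`. -/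
def IsCondPMF {𝒳 𝒴 M : Type*} [Fintype M] (Q : 𝒳 → 𝒴 → M → ℝ) : Prop :=
  ∀ x y, (∀ m, 0 ≤ Q x y m) ∧ ∑ m, Q x y m = 1

/-- Conditional Rényi entropy of order `α` (base-2 logarithms). -/
def condRenyi {𝒳 𝒴 : Type*} [Fintype 𝒳] [Fintype 𝒴] (α : ℝ) (P : 𝒳 → 𝒴 → ℝ) : ℝ :=
  (α / (1 - α)) * Real.logb 2 (∑ y, (∑ x, P x y ^ α) ^ (1 / α))

/-- Bob's guessing ambiguity: the least `ρ`-th guessing moment over guessing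
functions for `X` given `(Y, M₁, M₂)`. -/
def bobGuessAmb {𝒳 𝒴 M₁ M₂ : Type*} [Fintype 𝒳] [Fintype 𝒴] [Fintype M₁] [Fintype M₂]
    (ρ : ℝ) (P : 𝒳 → 𝒴 → ℝ) (Q : 𝒳 → 𝒴 → M₁ × M₂ → ℝ) : ℝ :=
  sInf { e | ∃ G : 𝒳 → 𝒴 × M₁ × M₂ → ℕ, IsGuessing G ∧
    e = ∑ x, ∑ y, ∑ m : M₁ × M₂, P x y * Q x y m * (G x (y, m) : ℝ) ^ ρ }

/-- Eve's ambiguity: the least `ρ`-th moment of the minimum of two guessing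
functions, one for `X` given `(Y, M₁)` and one for `X` given `(Y, M₂)`. -/
def eveAmb {𝒳 𝒴 M₁ M₂ : Type*} [Fintype 𝒳] [Fintype 𝒴] [Fintype M₁] [Fintype M₂]
    (ρ : ℝ) (P : 𝒳 → 𝒴 → ℝ) (Q : 𝒳 → 𝒴 → M₁ × M₂ → ℝ) : ℝ :=
  sInf { e | ∃ G₁ : 𝒳 → 𝒴 × M₁ → ℕ, ∃ G₂ : 𝒳 → 𝒴 × M₂ → ℕ,
    IsGuessing G₁ ∧ IsGuessing G₂ ∧
    e = ∑ x, ∑ y, ∑ m : M₁ × M₂, P x y * Q x y m *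
      ((min (G₁ x (y, m.1)) (G₂ x (y, m.2)) : ℕ) : ℝ) ^ ρ }

/-- Bob's list ambiguity: the `ρ`-th moment of the size of the list of all `x`
with positive posterior probability given `(Y, M₁, M₂)`. -/
def bobListAmb {𝒳 𝒴 M₁ M₂ : Type*} [Fintype 𝒳] [Fintype 𝒴] [Fintype M₁] [Fintype M₂]
    (ρ : ℝ) (P : 𝒳 → 𝒴 → ℝ) (Q : 𝒳 → 𝒴 → M₁ × M₂ → ℝ) : ℝ :=
  ∑ x, ∑ y, ∑ m : M₁ × M₂, P x y * Q x y m *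
    ((Finset.univ.filter fun x' => 0 < P x' y * Q x' y m).card : ℝ) ^ ρ
theorem guessing_induces_good_taskEncoder
    {𝒳 𝒴 M : Type*} [Fintype 𝒳] [Fintype 𝒴] [Fintype M]
    [Nonempty 𝒳] [Nonempty 𝒴] [Nonempty M]
    (ρ : ℝ) (hρ : 0 < ρ) (P : 𝒳 → 𝒴 → ℝ) (hP : IsPMF P)
    (hM : Real.logb 2 (Fintype.card 𝒳) + 1 < (Fintype.card M : ℝ))
    (hM' : Fintype.card M / (Nat.log 2 (Fintype.card 𝒳) + 1) ≤ Fintype.card 𝒳)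
    (G : 𝒳 → 𝒴 → ℕ) (hG : IsGuessing G) :
    ∃ f : 𝒳 × 𝒴 → M,
      ∑ x, ∑ y, P x y *
          ((Finset.univ.filter fun x' => 0 < P x' y ∧ f (x', y) = f (x, y)).card : ℝ) ^ ρ ≤
        1 + 2 ^ ρ * (∑ x, ∑ y, P x y * (G x y : ℝ) ^ ρ) *
          ((Fintype.card M : ℝ) / (Real.logb 2 (Fintype.card 𝒳) + 1) - 1) ^ (-ρ) := by
  classical
  set n := Fintype.card 𝒳 with hn_def
  set m := Fintype.card M with hm_def
  have hn1 : 1 ≤ n := Fintype.card_pos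
  have hm0 : 0 < m := Fintype.card_pos
  set Lg := Nat.log 2 n with hLg_def
  set L := Lg + 1 with hL_def
  set k := m / L with hk_def
  have hlogb0 : (0:ℝ) ≤ Real.logb 2 n := by
    apply Real.logb_nonneg (by norm_num)
    exact_mod_cast hn1
  have hnatlog : (Lg : ℝ) ≤ Real.logb 2 n := Real.natLog_le_logb n 2
  have hLreal : (L : ℝ) ≤ Real.logb 2 n + 1 := by
    rw [hL_def]; push_cast; linarith
  have hLm : L < m := by
    have : (L : ℝ) < m := lt_of_le_of_lt hLreal hM
    exact_mod_cast this
  have hL0 : 0 < L := Nat.succ_pos _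
  have hk1 : 1 ≤ k := (Nat.one_le_div_iff hL0).2 hLm.le
  have hk0 : 0 < k := hk1
  set c : ℝ := (m : ℝ) / (Real.logb 2 n + 1) - 1 with hc_def
  have hc0 : 0 < c := by
    have h1 : (0:ℝ) < Real.logb 2 n + 1 := by linarith
    have h2 : (1:ℝ) < (m : ℝ) / (Real.logb 2 n + 1) := (one_lt_div h1).2 hM
    rw [hc_def]; linarith
  have hck : c ≤ (k : ℝ) := by
    have h1 : (0:ℝ) < Real.logb 2 n + 1 := by linarith
    have hL0' : (0:ℝ) < (L:ℝ) := by exact_mod_cast hL0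
    have h2 : (m:ℝ) / (Real.logb 2 n + 1) ≤ (m:ℝ) / L :=
      div_le_div_of_nonneg_left (by positivity) hL0' hLreal
    have h3 : (m:ℝ) / L < (k:ℝ) + 1 := by
      rw [div_lt_iff₀ hL0']
      have h4 : m < (k + 1) * L := by
        have h5 := Nat.div_add_mod m L
        have h6 := Nat.mod_lt m hL0
        calc m = L * (m / L) + m % L := h5.symm
          _ < L * k + L := by rw [hk_def]; omega
          _ = (k + 1) * L := by ring
      exact_mod_cast h4
    rw [hc_def]; linarith
  -- block size and label
  set B : ℕ → ℕ := fun g => 2 ^ Nat.log 2 g / k + 1 with hB_def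
  set lab : ℕ → ℕ := fun g => Nat.log 2 g * k + (g - 2 ^ Nat.log 2 g) / B g with hlab_def
  have hB0 : ∀ g, 0 < B g := fun g => Nat.succ_pos _
  have hs_lt : ∀ g, 1 ≤ g → (g - 2 ^ Nat.log 2 g) / B g < k := by
    intro g hg
    apply Nat.div_lt_iff_lt_mul (hB0 g) |>.2
    have h1 : g < 2 ^ (Nat.log 2 g + 1) := Nat.lt_pow_succ_log_self (by norm_num) g
    have h2 : 2 ^ Nat.log 2 g ≤ g := Nat.pow_log_le_self 2 (by omega)
    have h3 : g - 2 ^ Nat.log 2 g < 2 ^ Nat.log 2 g := by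
      have : 2 ^ (Nat.log 2 g + 1) = 2 ^ Nat.log 2 g * 2 := by ring
      omega
    have h4 : 2 ^ Nat.log 2 g < k * B g := by
      have := Nat.mod_lt (2 ^ Nat.log 2 g) hk0
      have h5 := Nat.div_add_mod (2 ^ Nat.log 2 g) k
      calc 2 ^ Nat.log 2 g = k * (2 ^ Nat.log 2 g / k) + 2 ^ Nat.log 2 g % k := h5.symm
        _ < k * (2 ^ Nat.log 2 g / k) + k := by omega
        _ = k * B g := by rw [hB_def]; ring
    omega
  have hlab_lt : ∀ g, 1 ≤ g → g ≤ n → lab g < m := by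
    intro g hg hgn
    have hj : Nat.log 2 g ≤ Lg := Nat.log_mono_right hgn
    have : lab g < (Lg + 1) * k := by
      have := hs_lt g hg
      simp only [hlab_def]
      calc Nat.log 2 g * k + (g - 2 ^ Nat.log 2 g) / B g
          < Nat.log 2 g * k + k := by omega
        _ ≤ Lg * k + k := by have := Nat.mul_le_mul_right k hj; omega
        _ = (Lg + 1) * k := by ring
    calc lab g < (Lg + 1) * k := this
      _ = k * L := by rw [hL_def]; ring
      _ ≤ m := by rw [hk_def]; exact Nat.div_mul_le_self m L
  -- label equality forces same chunk and slot
  have hlab_inj : ∀ g g', 1 ≤ g → 1 ≤ g' → lab g = lab g' →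
      Nat.log 2 g = Nat.log 2 g' ∧
      (g - 2 ^ Nat.log 2 g) / B g = (g' - 2 ^ Nat.log 2 g') / B g' := by
    intro g g' hg hg' heq
    have h1 := hs_lt g hg
    have h2 := hs_lt g' hg'
    simp only [hlab_def] at heq
    have e1 : ∀ j s : ℕ, s < k → (j * k + s) / k = j := by
      intro j s hs
      rw [mul_comm, Nat.mul_add_div hk0, Nat.div_eq_of_lt hs, add_zero]
    have hj : Nat.log 2 g = Nat.log 2 g' := by
      have h3 : (Nat.log 2 g * k + (g - 2 ^ Nat.log 2 g) / B g) / k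
          = (Nat.log 2 g' * k + (g' - 2 ^ Nat.log 2 g') / B g') / k := by rw [heq]
      rwa [e1 _ _ h1, e1 _ _ h2] at h3
    refine ⟨hj, ?_⟩
    have : Nat.log 2 g * k = Nat.log 2 g' * k := by rw [hj]
    omega
  -- the encoder
  obtain ⟨e⟩ : Nonempty (Fin m ≃ M) := ⟨(Fintype.equivFin M).symm⟩
  set f : 𝒳 × 𝒴 → M := fun p => e ⟨lab (G p.1 p.2) % m, Nat.mod_lt _ hm0⟩ with hf_def
  refine ⟨f, ?_⟩
  -- list size bound
  have hcard : ∀ x y, ((Finset.univ.filter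
      fun x' : 𝒳 => 0 < P x' y ∧ f (x', y) = f (x, y)).card) ≤ B (G x y) := by
    intro x y
    obtain ⟨hGinj, hGmem⟩ := hG y
    have hg := hGmem x
    rw [Finset.mem_Icc] at hg
    set g := G x y with hg_def
    have hsub : ∀ x' ∈ (Finset.univ.filter
        fun x' : 𝒳 => 0 < P x' y ∧ f (x', y) = f (x, y)),
        G x' y ∈ Finset.Ico
          (2 ^ Nat.log 2 g + B g * ((g - 2 ^ Nat.log 2 g) / B g))
          (2 ^ Nat.log 2 g + B g * ((g - 2 ^ Nat.log 2 g) / B g) + B g) := by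
      intro x' hx'
      rw [Finset.mem_filter] at hx'
      have hg' := hGmem x'
      rw [Finset.mem_Icc] at hg'
      have h1 : lab (G x' y) < m := hlab_lt (G x' y) hg'.1 hg'.2
      have h2 : lab g < m := hlab_lt g hg.1 hg.2
      have h4 : lab (G x' y) % m = lab g % m := by
        have := e.injective hx'.2.2
        exact congrArg Fin.val this
      have h5 : lab (G x' y) = lab g := by
        rwa [Nat.mod_eq_of_lt h1, Nat.mod_eq_of_lt h2] at h4
      obtain ⟨hje, hse⟩ := hlab_inj (G x' y) g hg'.1 hg.1 h5
      have hBeq : B (G x' y) = B g := by simp only [hB_def]; rw [hje]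
      have hr := hse
      rw [hje, hBeq] at hr
      have hpow : 2 ^ Nat.log 2 g ≤ G x' y := by
        have := Nat.pow_log_le_self 2 (show G x' y ≠ 0 by omega)
        rwa [hje] at this
      have hdm := Nat.div_add_mod (G x' y - 2 ^ Nat.log 2 g) (B g)
      have hml := Nat.mod_lt (G x' y - 2 ^ Nat.log 2 g) (hB0 g)
      rw [hr] at hdm
      rw [Finset.mem_Ico]
      omega
    calc (Finset.univ.filter
        fun x' : 𝒳 => 0 < P x' y ∧ f (x', y) = f (x, y)).card
        ≤ (Finset.Ico
          (2 ^ Nat.log 2 g + B g * ((g - 2 ^ Nat.log 2 g) / B g))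
          (2 ^ Nat.log 2 g + B g * ((g - 2 ^ Nat.log 2 g) / B g) + B g)).card :=
          Finset.card_le_card_of_injOn (fun x' => G x' y) hsub
            (fun a _ b _ h => hGinj h)
      _ = B g := by rw [Nat.card_Ico]; omega
  -- pointwise real bound on the block size
  have hBbound : ∀ g : ℕ, 1 ≤ g → g ≤ n →
      ((B g : ℝ)) ^ ρ ≤ 1 + (2 * (g : ℝ) / c) ^ ρ := by
    intro g hg hgn
    have hgc0 : (0:ℝ) ≤ 2 * (g : ℝ) / c := by positivity
    by_cases hcase : 2 ^ Nat.log 2 g < k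
    · have hB1 : B g = 1 := by
        simp only [hB_def]
        rw [Nat.div_eq_of_lt hcase]
      rw [hB1]
      push_cast
      rw [Real.one_rpow]
      have := Real.rpow_nonneg hgc0 ρ
      linarith
    · push_neg at hcase
      have hk0' : (0:ℝ) < (k:ℝ) := by exact_mod_cast hk0
      have hpow : (2:ℝ) ^ Nat.log 2 g ≤ (g:ℝ) := by
        exact_mod_cast Nat.pow_log_le_self 2 (by omega)
      have hkp : (k:ℝ) ≤ (2:ℝ) ^ Nat.log 2 g := by exact_mod_cast hcase
      have hb1 : (B g : ℝ) ≤ (2:ℝ) ^ Nat.log 2 g / k + 1 := by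
        simp only [hB_def]
        push_cast
        have := Nat.cast_div_le (α := ℝ) (m := 2 ^ Nat.log 2 g) (n := k)
        push_cast at this
        linarith
      have h1le : (1:ℝ) ≤ (2:ℝ) ^ Nat.log 2 g / k := (one_le_div hk0').2 hkp
      have hb2 : (B g : ℝ) ≤ 2 * (g:ℝ) / c := by
        have e1 : (B g : ℝ) ≤ 2 * ((2:ℝ) ^ Nat.log 2 g / k) := by linarith
        have e2 : 2 * ((2:ℝ) ^ Nat.log 2 g / k) ≤ 2 * ((g:ℝ) / k) := by
          gcongr
        have e3 : 2 * ((g:ℝ) / k) ≤ 2 * ((g:ℝ) / c) := by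
          have := div_le_div_of_nonneg_left (c := c) (show (0:ℝ) ≤ (g:ℝ) by positivity) hc0 hck
          linarith
        calc (B g : ℝ) ≤ 2 * ((2:ℝ) ^ Nat.log 2 g / k) := e1
          _ ≤ 2 * ((g:ℝ) / k) := e2
          _ ≤ 2 * ((g:ℝ) / c) := e3
          _ = 2 * (g:ℝ) / c := by ring
      have := Real.rpow_le_rpow (by positivity) hb2 hρ.le
      linarith
  -- rewrite the penalty term
  set cc := c ^ (-ρ) with hcc_def
  have hcc0 : (0:ℝ) ≤ cc := Real.rpow_nonneg hc0.le _
  have hsplit : ∀ g : ℕ, (2 * (g:ℝ) / c) ^ ρ = 2 ^ ρ * (g:ℝ) ^ ρ * cc := by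
    intro g
    rw [Real.div_rpow (by positivity) hc0.le,
      Real.mul_rpow (by norm_num) (Nat.cast_nonneg g),
      hcc_def, Real.rpow_neg hc0.le, div_eq_mul_inv]
  -- pointwise bound on each summand
  have key : ∀ x y, P x y * ((Finset.univ.filter
        fun x' : 𝒳 => 0 < P x' y ∧ f (x', y) = f (x, y)).card : ℝ) ^ ρ ≤
      P x y * (1 + 2 ^ ρ * (G x y : ℝ) ^ ρ * cc) := by
    intro x y
    apply mul_le_mul_of_nonneg_left _ (hP.1 x y)
    have hg := (hG y).2 x
    rw [Finset.mem_Icc] at hg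
    calc ((Finset.univ.filter
        fun x' : 𝒳 => 0 < P x' y ∧ f (x', y) = f (x, y)).card : ℝ) ^ ρ
        ≤ ((B (G x y) : ℝ)) ^ ρ := by
          apply Real.rpow_le_rpow (Nat.cast_nonneg _) _ hρ.le
          exact_mod_cast hcard x y
      _ ≤ 1 + (2 * (G x y : ℝ) / c) ^ ρ := hBbound (G x y) hg.1 hg.2
      _ = 1 + 2 ^ ρ * (G x y : ℝ) ^ ρ * cc := by rw [hsplit]
  calc ∑ x, ∑ y, P x y * ((Finset.univ.filter
        fun x' : 𝒳 => 0 < P x' y ∧ f (x', y) = f (x, y)).card : ℝ) ^ ρ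
      ≤ ∑ x, ∑ y, P x y * (1 + 2 ^ ρ * (G x y : ℝ) ^ ρ * cc) := by
        apply Finset.sum_le_sum; intro x _
        apply Finset.sum_le_sum; intro y _
        exact key x y
    _ = (∑ x, ∑ y, P x y) + 2 ^ ρ * (∑ x, ∑ y, P x y * (G x y : ℝ) ^ ρ) * cc := by
        simp only [mul_add, mul_one, Finset.sum_add_distrib]
        congr 1
        rw [Finset.mul_sum, Finset.sum_mul]
        apply Finset.sum_congr rfl; intro x _
        rw [Finset.mul_sum, Finset.sum_mul]
        apply Finset.sum_congr rfl; intro y _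
        ring
    _ = 1 + 2 ^ ρ * (∑ x, ∑ y, P x y * (G x y : ℝ) ^ ρ) * cc := by rw [hP.2]
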